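/- If β_i = β for all i (coupons divided equally among n miners), then D(β,...,β) = log n, and consequently the equilibrium decentralization coefficient satisfies D(h₁,...,h_n) ≥ (nβ/H)·log n + ((Σρ/α_i)/H)·D(ρ/α₁,...,ρ/α_n). -/

import Mathlib

/-- Decentralization coefficient: Shannon entropy of the normalized vector. -/
noncomputable def decentralization {n : ℕ} (x : Fin n → ℝ) : ℝ :=
  -∑ i, (x i / ∑ j, x j) * Real.log (x i / ∑ j, x j)

lemma entropy_superadd {n : ℕ} (b c : Fin n → ℝ) (hn : 0 < n)
    (hb : ∀ i, 0 < b i) (hc : ∀ i, 0 < c i) :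
    ((∑ i, b i) / ∑ i, (b i + c i)) * decentralization b +
      ((∑ i, c i) / ∑ i, (b i + c i)) * decentralization c ≤
      decentralization (fun i => b i + c i) := by
  have hne : (Finset.univ : Finset (Fin n)).Nonempty := by
    simp [Finset.univ_nonempty_iff, Fin.pos_iff_nonempty.mp hn]
  have hBpos : 0 < ∑ i, b i := Finset.sum_pos (fun i _ => hb i) hne
  have hCpos : 0 < ∑ i, c i := Finset.sum_pos (fun i _ => hc i) hne
  have hH : (∑ i, (b i + c i)) = (∑ i, b i) + (∑ i, c i) := Finset.sum_add_distrib
  have hHpos : 0 < (∑ i, b i) + (∑ i, c i) := by positivity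
  rw [decentralization, decentralization, decentralization, hH]
  have key : ∀ i : Fin n,
      ((b i + c i) / ((∑ i, b i) + (∑ i, c i))) *
          Real.log ((b i + c i) / ((∑ i, b i) + (∑ i, c i))) ≤
      ((∑ i, b i) / ((∑ i, b i) + (∑ i, c i))) *
          ((b i / ∑ j, b j) * Real.log (b i / ∑ j, b j)) +
      ((∑ i, c i) / ((∑ i, b i) + (∑ i, c i))) *
          ((c i / ∑ j, c j) * Real.log (c i / ∑ j, c j)) := by
    intro i
    have hbi := hb i
    have hci := hc i
    have h := Real.convexOn_mul_log.2
      (Set.mem_Ici.mpr (le_of_lt (by positivity : (0:ℝ) < b i / ∑ j, b j)))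
      (Set.mem_Ici.mpr (le_of_lt (by positivity : (0:ℝ) < c i / ∑ j, c j)))
      (le_of_lt (by positivity :
        (0:ℝ) < (∑ i, b i) / ((∑ i, b i) + (∑ i, c i))))
      (le_of_lt (by positivity :
        (0:ℝ) < (∑ i, c i) / ((∑ i, b i) + (∑ i, c i))))
      (by field_simp)
    simp only [smul_eq_mul] at h
    have heq : ((∑ i, b i) / ((∑ i, b i) + (∑ i, c i))) * (b i / ∑ j, b j) +
        ((∑ i, c i) / ((∑ i, b i) + (∑ i, c i))) * (c i / ∑ j, c j) =
        (b i + c i) / ((∑ i, b i) + (∑ i, c i)) := by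
      field_simp
    rw [heq] at h
    simpa using h
  have hsum := Finset.sum_le_sum (fun i (_ : i ∈ Finset.univ) => key i)
  rw [Finset.sum_add_distrib, ← Finset.mul_sum, ← Finset.mul_sum] at hsum
  linarith [hsum]

lemma decentralization_const {n : ℕ} (hn : 0 < n) (β : ℝ) (hβ : 0 < β) :
    decentralization (fun _ : Fin n => β) = Real.log n := by
  have hn' : (0:ℝ) < n := Nat.cast_pos.mpr hn
  rw [decentralization]
  have hs : (∑ _j : Fin n, β) = n * β := by
    rw [Finset.sum_const, Finset.card_univ, Fintype.card_fin]; ring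
  simp only [hs]
  have h1 : β / ((n:ℝ) * β) = 1 / n := by
    field_simp
  rw [h1]
  rw [Finset.sum_const, Finset.card_univ, Fintype.card_fin]
  rw [Real.log_div (by norm_num) (by positivity), Real.log_one]
  rw [nsmul_eq_mul]
  field_simp
  ring

/-- If coupons are divided equally (`β_i = β` for all `i`), then
`D(β,…,β) = log n` and the equilibrium decentralization satisfies the stated
lower bound. -/
theorem decentralization_equal_coupons (n : ℕ) (hn : 0 < n)
    (α : Fin n → ℝ) (β ρ : ℝ) (hα : ∀ i, 0 < α i) (hβ : 0 < β) (hρ : 0 < ρ) :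
    decentralization (fun _ : Fin n => β) = Real.log n ∧
    ((n : ℝ) * β / ∑ i, (β + ρ / α i)) * Real.log n +
        ((∑ i, ρ / α i) / ∑ i, (β + ρ / α i)) *
          decentralization (fun i => ρ / α i) ≤
      decentralization (fun i : Fin n => β + ρ / α i) := by
  refine ⟨decentralization_const hn β hβ, ?_⟩
  have h := entropy_superadd (fun _ : Fin n => β) (fun i => ρ / α i) hn
    (fun _ => hβ) (fun i => by have := hα i; positivity)
  have hs : (∑ _i : Fin n, β) = (n : ℝ) * β := by
    rw [Finset.sum_const, Finset.card_univ, Fintype.card_fin]; ring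
  rw [hs, decentralization_const hn β hβ] at h
  exact h
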